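/- For any (right) hypergroup over a group M_H, the map f₀: H → H ⊙ M, α ↦ (α·θ)o, is an injective group homomorphism, the map f₁: M → H ⊙ M, a ↦ εa, is injective, and every element of H ⊙ M has a unique representation as a product f₀(ξ)·f₁(x) with ξ ∈ H, x ∈ M; consequently the image of f₁ is a right complementary set (right transversal) to the subgroup f₀(H) in H ⊙ M. -/

import Mathlib

/-- A (right) hypergroup over the group `H`, with basic set `M`:
structural mappings `Φ` (written `a^α`), `Ψ` (written `ᵃα`), `Ξ` (written `[a,b]`),
`Λ` (written `(a,b)`), satisfying conditions P1)–P4). -/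
structure HypergroupOverGroup (M H : Type*) [Group H] where
  Φ : M → H → M
  Ψ : M → H → H
  Ξ : M → M → M
  Λ : M → M → H
  /-- the left neutral element of `Ξ` -/
  o : M
  P1i : ∀ a b : M, ∃! x : M, Ξ x a = b
  P1ii : ∀ a : M, Ξ o a = a
  P2i : ∀ (a : M) (α β : H), Φ (Φ a α) β = Φ a (α * β)
  P2ii : ∀ a : M, Φ a 1 = a
  P3 : Function.Surjective fun α : H => Ψ o α
  A1 : ∀ (a : M) (α β : H), Ψ a (α * β) = Ψ a α * Ψ (Φ a α) β
  A2 : ∀ (a b : M) (α : H), Φ (Ξ a b) α = Ξ (Φ a (Ψ b α)) (Φ b α)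
  A3 : ∀ (a b : M) (α : H),
    Λ a b * Ψ (Ξ a b) α = Ψ a (Ψ b α) * Λ (Φ a (Ψ b α)) (Φ b α)
  A4 : ∀ a b c : M, Ξ (Ξ a b) c = Ξ (Φ a (Λ b c)) (Ξ b c)
  A5 : ∀ a b c : M,
    Λ a b * Λ (Ξ a b) c = Ψ a (Λ b c) * Λ (Φ a (Λ b c)) (Ξ b c)

/-- The multiplication of the exact product `H ⊙ M` associated with a hypergroup
over the group `M_H`, on the set of two-letter words `αa` (encoded as pairs):
`αa · βb = (α · ᵃβ · (a^β, b))[a^β, b]`. -/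
def HypergroupOverGroup.emul {M H : Type*} [Group H]
    (h : HypergroupOverGroup M H) : H × M → H × M → H × M :=
  fun p q =>
    (p.1 * h.Ψ p.2 q.1 * h.Λ (h.Φ p.2 q.1) q.2, h.Ξ (h.Φ p.2 q.1) q.2)

/-- The map `f₀ : H → H ⊙ M, α ↦ (α·θ)o` is an injective homomorphism into the
exact product, the map `f₁ : M → H ⊙ M, a ↦ εa` is injective, and every element
of `H ⊙ M` has a unique representation as a product `f₀(ξ) · f₁(x)` with
`ξ ∈ H`, `x ∈ M`; consequently the image of `f₁` is a right complementary set
(right transversal) to the subgroup `f₀(H)` in `H ⊙ M`. -/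
theorem exactProduct_transversal {M H : Type*} [Group H]
    (h : HypergroupOverGroup M H) (θ : H) (hθ : θ = (h.Λ h.o h.o)⁻¹)
    (f₀ : H → H × M) (hf₀ : ∀ α : H, f₀ α = (α * θ, h.o))
    (f₁ : M → H × M) (hf₁ : ∀ a : M, f₁ a = ((1 : H), a)) :
    Function.Injective f₀ ∧
    (∀ α β : H, f₀ (α * β) = h.emul (f₀ α) (f₀ β)) ∧
    Function.Injective f₁ ∧
    (∀ z : H × M, ∃! q : H × M, h.emul (f₀ q.1) (f₁ q.2) = z) := by
  -- Ψ a 1 = 1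
  have hΨ1 : ∀ a : M, h.Ψ a 1 = 1 := by
    intro a
    have e := h.A1 a 1 1
    rw [h.P2ii, one_mul] at e
    exact (mul_eq_left.mp e.symm)
  -- Φ o (Ψ b α) = o
  have hΦoΨ : ∀ (b : M) (α : H), h.Φ h.o (h.Ψ b α) = h.o := by
    intro b α
    have e := h.A2 h.o b α
    rw [h.P1ii] at e
    obtain ⟨x, hx, hu⟩ := h.P1i (h.Φ b α) (h.Φ b α)
    have h1 := hu _ e.symm
    have h2 := hu h.o (h.P1ii _)
    rw [h1, h2]
  -- Φ o γ = o for all γ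
  have hΦo : ∀ γ : H, h.Φ h.o γ = h.o := by
    intro γ
    obtain ⟨α, hα⟩ := h.P3 γ
    simp only at hα
    rw [← hα]
    exact hΦoΨ h.o α
  -- Ψ o is conjugation by θ (on the image of Ψ o, hence everywhere)
  have hconj : ∀ γ : H, h.Ψ h.o γ = θ⁻¹ * γ * θ := by
    intro γ
    obtain ⟨α, hα⟩ := h.P3 γ
    simp only at hα
    have e := h.A3 h.o h.o α
    rw [h.P1ii, hΦoΨ] at e
    -- e : Λ o o * Ψ o α = Ψ o (Ψ o α) * Λ o (Φ o α)
    rw [hΦo] at e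
    -- Λ o o * Ψ o α = Ψ o (Ψ o α) * Λ o o
    rw [← hα, hθ, inv_inv]
    exact eq_mul_inv_of_mul_eq e.symm
  constructor
  · intro α β hab
    rw [hf₀, hf₀, Prod.ext_iff] at hab
    exact mul_right_cancel hab.1
  constructor
  · intro α β
    rw [hf₀, hf₀, hf₀]
    unfold HypergroupOverGroup.emul
    simp only
    rw [hΦo, h.P1ii, hconj, hθ]
    rw [Prod.mk.injEq]
    exact ⟨by group, rfl⟩
  constructor
  · intro a b hab
    rw [hf₁, hf₁, Prod.ext_iff] at hab
    exact hab.2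
  · intro z
    refine ⟨(z.1 * (h.Λ h.o z.2)⁻¹ * θ⁻¹, z.2), ?_, ?_⟩
    · dsimp only
      rw [hf₀, hf₁]
      unfold HypergroupOverGroup.emul
      dsimp only
      rw [h.P2ii, hΨ1, h.P1ii, mul_one]
      rw [Prod.ext_iff]
      exact ⟨by group, rfl⟩
    · rintro ⟨ξ, x⟩ hq
      rw [hf₀, hf₁] at hq
      unfold HypergroupOverGroup.emul at hq
      simp only at hq
      rw [h.P2ii, hΨ1, h.P1ii, mul_one] at hq
      obtain ⟨h1, h2⟩ := Prod.ext_iff.mp hq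
      simp only at h1 h2
      subst h2
      simp only [Prod.mk.injEq, and_true]
      rw [← h1]
      group
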